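/- Let Δ be a finite acyclic quiver, M a representation of Δ, E = End(M)^op its opposite endomorphism ring, so that each M_i is an E-module. Suppose M is endo-finite, i.e., M has finite length as an E-module. Then for any finite-dimensional representation X of Δ with dimension vector x, both Hom_Δ(X,M) and Ext¹_Δ(X,M) have finite length as E-modules, and |Hom(X,M)|_E − |Ext¹(X,M)|_E = Σ_i x_i·|M_i|_E − Σ_α x_{s(α)}·|M_{t(α)}|_E. -/

import Mathlib

set_option synthInstance.maxHeartbeats 1000000
set_option maxHeartbeats 1000000

/-- A finite quiver: finite sets of vertices and arrows with source and target maps. -/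
structure FinQuiver where
  V : Type
  A : Type
  [fintypeV : Fintype V]
  [fintypeA : Fintype A]
  [decEqV : DecidableEq V]
  s : A → V
  t : A → V

attribute [instance] FinQuiver.fintypeV FinQuiver.fintypeA FinQuiver.decEqV

/-- A finite quiver is acyclic (has no oriented cycles) iff its vertices admit a
grading strictly increasing along arrows. -/
def FinQuiver.Acyclic (Q : FinQuiver) : Prop :=
  ∃ f : Q.V → ℕ, ∀ a : Q.A, f (Q.s a) < f (Q.t a)

/-- A representation of a quiver over a field `k`: a vector space at each vertex and a
linear map along each arrow. -/
structure QRep (k : Type) [Field k] (Q : FinQuiver) where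
  M : Q.V → Type
  [acg : ∀ i, AddCommGroup (M i)]
  [mod : ∀ i, Module k (M i)]
  map : ∀ a : Q.A, M (Q.s a) →ₗ[k] M (Q.t a)

attribute [instance] QRep.acg QRep.mod

variable {k : Type} [Field k] {Q : FinQuiver}

/-- The (Jordan–Hölder) length of a module: the supremum of the lengths of chains of
submodules. -/
noncomputable def mlength (R M : Type*) [Ring R] [AddCommGroup M] [Module R M] : ℕ∞ :=
  Order.height (⊤ : Submodule R M)

/-- The dimension vector of a representation. -/
noncomputable def dimVec (X : QRep k Q) : Q.V → ℤ :=
  fun i => (Module.finrank k (X.M i) : ℤ)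

/-- The endomorphism algebra of a representation, as a subalgebra of
`Π i, End_k(M_i)`: the families of linear maps commuting with all arrow maps.
(The vertex spaces `M_i` are naturally left modules over this algebra; this is the
Lean rendering of the right action of `End(M)`, i.e. of left modules over
`E(M) = End(M)^op`.) -/
def REnd (M : QRep k Q) : Subalgebra k (∀ i, Module.End k (M.M i)) where
  carrier := {f | ∀ a, (f (Q.t a)) ∘ₗ (M.map a) = (M.map a) ∘ₗ (f (Q.s a))}
  add_mem' := by
    intro f g hf hg a
    ext x
    simp only [Pi.add_apply, LinearMap.add_comp, LinearMap.comp_add, hf a, hg a]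
  mul_mem' := by
    intro f g hf hg a
    have hf' := hf a
    have hg' := hg a
    ext x
    have h1 := LinearMap.congr_fun hg' x
    have h2 := LinearMap.congr_fun hf' ((g (Q.s a)) x)
    simp only [LinearMap.comp_apply, Pi.mul_apply, Module.End.mul_apply] at *
    rw [h1, h2]
  algebraMap_mem' := by
    intro c a
    ext x
    simp [Module.algebraMap_end_apply]

/-- Each vertex space of a representation is a module over the endomorphism ring. -/
noncomputable instance rendModule (M : QRep k Q) (i : Q.V) : Module (REnd M) (M.M i) :=
  Module.compHom _ ((Pi.evalRingHom (fun j => Module.End k (M.M j)) i).comp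
    (REnd M).val.toRingHom)

theorem rend_smul_def (M : QRep k Q) (i : Q.V) (e : REnd M) (x : M.M i) :
    e • x = (e.val i) x := rfl

instance (M : QRep k Q) (i : Q.V) : SMulCommClass k (REnd M) (M.M i) :=
  ⟨fun c e x => ((e.val i).map_smul c x).symm⟩

/-- The map `δ_{XM}`, as a homomorphism of modules over the endomorphism ring of `M`.
Its kernel is `Hom(X,M)` and its cokernel is `Ext¹(X,M)`, as `E(M)`-modules. -/
noncomputable def deltaE (X M : QRep k Q) :
    (∀ i, X.M i →ₗ[k] M.M i) →ₗ[REnd M] (∀ a : Q.A, X.M (Q.s a) →ₗ[k] M.M (Q.t a)) where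
  toFun f := fun a => (f (Q.t a)).comp (X.map a) - (M.map a).comp (f (Q.s a))
  map_add' f g := by
    funext a
    ext x
    simp only [Pi.add_apply, LinearMap.add_comp, LinearMap.comp_add, LinearMap.sub_apply,
      LinearMap.add_apply, LinearMap.comp_apply]
    abel
  map_smul' e f := by
    funext a
    ext x
    have h := LinearMap.congr_fun (e.property a) ((f (Q.s a)) x)
    simp only [LinearMap.comp_apply] at h
    simp only [RingHom.id_apply, Pi.smul_apply, LinearMap.sub_apply, LinearMap.comp_apply,
      LinearMap.smul_apply, rend_smul_def, smul_sub]
    change (e.val (Q.t a)) ((f (Q.t a)) ((X.map a) x)) -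
      (M.map a) ((e.val (Q.s a)) ((f (Q.s a)) x)) = _
    rw [← h]


section MLengthHelpers

open Order

universe u v w

variable {R : Type u} [Ring R]


lemma mlength_congr {M : Type v} {N : Type w} [AddCommGroup M] [Module R M]
    [AddCommGroup N] [Module R N] (e : M ≃ₗ[R] N) : mlength R M = mlength R N := by
  have h : (Submodule.orderIsoMapComap e) (⊤ : Submodule R M) = ⊤ := by
    simp [Submodule.orderIsoMapComap]
  rw [mlength, mlength]
  conv_rhs => rw [← h]
  exact (Order.height_orderIso (Submodule.orderIsoMapComap e) ⊤).symm

lemma ltseries_prod_length_le {α : Type v} {β : Type w} [PartialOrder α] [PartialOrder β]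
    (p : LTSeries (α × β)) :
    (p.length : ℕ∞) ≤ Order.height p.last.1 + Order.height p.last.2 := by
  suffices H : ∀ (n : ℕ) (p : LTSeries (α × β)), p.length = n →
      (p.length : ℕ∞) ≤ Order.height p.last.1 + Order.height p.last.2 from H _ p rfl
  intro n
  induction n with
  | zero => intro p hn; rw [hn]; simp
  | succ n ih =>
    intro p hn
    have hne : p.length ≠ 0 := by omega
    have h1 : p.eraseLast.length = n := by
      show p.length - 1 = n; omega
    have hlt : p.eraseLast.last < p.last := p.eraseLast_last_rel_last hne
    have h2 := ih p.eraseLast h1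
    rw [h1] at h2
    rw [hn]
    push_cast
    rcases Prod.lt_iff.mp hlt with ⟨h3, h4⟩ | ⟨h3, h4⟩
    · by_cases htop : Order.height p.eraseLast.last.1 = ⊤
      · have : Order.height p.last.1 = ⊤ :=
          top_le_iff.mp (htop ▸ Order.height_mono h3.le)
        rw [this, top_add]
        exact le_top
      · have hlt1 : Order.height p.eraseLast.last.1 < Order.height p.last.1 :=
          Order.height_strictMono h3 (lt_top_iff_ne_top.mpr htop)
      
        calc (n : ℕ∞) + 1 ≤ (Order.height p.eraseLast.last.1 + Order.height p.eraseLast.last.2) + 1 := by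
              exact add_le_add_left h2 1
          _ = (Order.height p.eraseLast.last.1 + 1) + Order.height p.eraseLast.last.2 := by
              rw [add_right_comm]
          _ ≤ Order.height p.last.1 + Order.height p.last.2 :=
              add_le_add ((ENat.add_one_le_iff htop).mpr hlt1) (Order.height_mono h4)
    · by_cases htop : Order.height p.eraseLast.last.2 = ⊤
      · have : Order.height p.last.2 = ⊤ :=
          top_le_iff.mp (htop ▸ Order.height_mono h4.le)
        rw [this, add_top]
        exact le_top
      · have hlt1 : Order.height p.eraseLast.last.2 < Order.height p.last.2 :=
          Order.height_strictMono h4 (lt_top_iff_ne_top.mpr htop)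
        calc (n : ℕ∞) + 1 ≤ (Order.height p.eraseLast.last.1 + Order.height p.eraseLast.last.2) + 1 := by
              exact add_le_add_left h2 1
          _ = Order.height p.eraseLast.last.1 + (Order.height p.eraseLast.last.2 + 1) := by
              rw [add_assoc]
          _ ≤ Order.height p.last.1 + Order.height p.last.2 :=
              add_le_add (Order.height_mono h3) ((ENat.add_one_le_iff htop).mpr hlt1)

lemma mlength_le_add {M : Type v} [AddCommGroup M] [Module R M] (N : Submodule R M) :
    mlength R M ≤ mlength R N + mlength R (M ⧸ N) := by
  rw [mlength]
  apply Order.height_le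
  intro p _
  have hmono : StrictMono (fun P : Submodule R M =>
      (P.comap N.subtype, P.map N.mkQ)) := by
    intro P P' h
    refine lt_of_le_of_ne ⟨Submodule.comap_mono h.le, Submodule.map_mono h.le⟩ ?_
    intro heq
    have h1 : P.comap N.subtype = P'.comap N.subtype := congrArg Prod.fst heq
    have h2 : P.map N.mkQ = P'.map N.mkQ := congrArg Prod.snd heq
    have e1 : N ⊓ P = N ⊓ P' := by
      rw [← Submodule.map_comap_subtype, h1, Submodule.map_comap_subtype]
    have e2 : N ⊔ P = N ⊔ P' := by
      rw [← Submodule.comap_map_mkQ, h2, Submodule.comap_map_mkQ]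
    exact h.ne (eq_of_le_of_inf_le_of_sup_le h.le
      (by rw [inf_comm, ← e1, inf_comm])
      (by rw [sup_comm, ← e2, sup_comm]))
  have := ltseries_prod_length_le (p.map _ hmono)
  refine le_trans ?_ (add_le_add (Order.height_mono (le_top (a := (p.last).comap N.subtype)))
    (Order.height_mono (le_top (a := (p.last).map N.mkQ))))
  simpa using this

lemma add_le_mlength {M : Type v} [AddCommGroup M] [Module R M] (N : Submodule R M) :
    mlength R N + mlength R (M ⧸ N) ≤ mlength R M := by
  rw [mlength, mlength, mlength, Order.height_eq_iSup_last_eq, Order.height_eq_iSup_last_eq,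
    iSup_subtype', iSup_subtype']
  haveI : Nonempty {p : LTSeries (Submodule R N) // p.last = ⊤} :=
    ⟨⟨RelSeries.singleton _ ⊤, rfl⟩⟩
  haveI : Nonempty {p : LTSeries (Submodule R (M ⧸ N)) // p.last = ⊤} :=
    ⟨⟨RelSeries.singleton _ ⊤, rfl⟩⟩
  apply ENat.iSup_add_iSup_le
  rintro ⟨p, hp⟩ ⟨q, hq⟩
  simp only
  -- map p into Submodule R M via map N.subtype
  have hsm1 : StrictMono (Submodule.map N.subtype :
      Submodule R N → Submodule R M) := fun A B h =>
    lt_of_le_of_ne (Submodule.map_mono h.le)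
      (fun e => h.ne (Submodule.map_injective_of_injective N.injective_subtype e))
  have hsm2 : StrictMono (Submodule.comap N.mkQ :
      Submodule R (M ⧸ N) → Submodule R M) := fun A B h =>
    lt_of_le_of_ne (Submodule.comap_mono h.le)
      (fun e => h.ne (Submodule.comap_injective_of_surjective
        (Submodule.Quotient.mk_surjective N) e))
  set P := p.map _ hsm1 with hP
  set Qs := q.map _ hsm2 with hQs
  have hPlast : P.last = N := by
    rw [LTSeries.last_map, hp, Submodule.map_top, Submodule.range_subtype]
  have hQlast : Qs.last = ⊤ := by
    rw [LTSeries.last_map, hq, Submodule.comap_top]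
  have hNle : ∀ x : Submodule R (M ⧸ N), N ≤ x.comap N.mkQ := by
    intro x
    have : N = Submodule.comap N.mkQ ⊥ := by
      rw [Submodule.comap_bot, Submodule.ker_mkQ]
    exact le_trans (le_of_eq this) (Submodule.comap_mono bot_le)
  rcases Nat.eq_zero_or_pos q.length with h0 | hpos
  · rw [h0]
    have : (P.length : ℕ∞) ≤ Order.height (⊤ : Submodule R M) :=
      Order.length_le_height le_top
    simpa using (show (p.length : ℕ∞) ≤ _ from this)
  · have hQlen : Qs.length ≠ 0 := by
      show q.length ≠ 0; omega
    set Q' := Qs.tail hQlen with hQ'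
    have hposQ : 0 < Qs.length := Nat.pos_of_ne_zero hQlen
    have hconn : P.last < Q'.head := by
      rw [hPlast, RelSeries.head_tail]
      have e1 : (1 : Fin (Qs.length + 1)) = (⟨0, hposQ⟩ : Fin Qs.length).succ := by
        apply Fin.ext
        show 1 % (Qs.length + 1) = 1
        exact Nat.mod_eq_of_lt (by omega)
      rw [e1]
      refine lt_of_le_of_lt ?_ (Qs.step ⟨0, hposQ⟩)
      show N ≤ Submodule.comap N.mkQ (q _)
      exact hNle _
    have hlast : (P.append Q' hconn).last = ⊤ := by
      rw [RelSeries.last_append]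
      show Q'.last = ⊤
      rw [RelSeries.last_tail, hQlast]
    have hlen : (P.append Q' hconn).length = p.length + q.length := by
      show P.length + Q'.length + 1 = p.length + q.length
      show p.length + (q.length - 1) + 1 = p.length + q.length
      omega
    have := Order.length_le_height (p := P.append Q' hconn)
      (x := (⊤ : Submodule R M)) (le_of_eq hlast)
    rw [hlen] at this
    exact_mod_cast this

lemma mlength_eq_add {M : Type v} [AddCommGroup M] [Module R M] (N : Submodule R M) :
    mlength R M = mlength R N + mlength R (M ⧸ N) :=
  le_antisymm (mlength_le_add N) (add_le_mlength N)



lemma mlength_eq_zero_of_subsingleton {M : Type v} [AddCommGroup M] [Module R M]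
    [Subsingleton M] : mlength R M = 0 := by
  rw [mlength, Order.height_eq_zero]
  intro b _
  intro x _
  rw [Subsingleton.elim x 0]
  exact b.zero_mem

lemma mlength_eq_one_of_simple {M : Type v} [AddCommGroup M] [Module R M]
    [IsSimpleModule R M] : mlength R M = 1 := by
  apply le_antisymm
  · rw [mlength, show (1 : ℕ∞) = ((1 : ℕ) : ℕ∞) from rfl]
    apply Order.height_le_coe_iff.mpr
    intro y hy
    have hy' : y = ⊥ := (IsSimpleOrder.eq_bot_or_eq_top y).resolve_right hy.ne
    subst hy'
    simp
  · rw [mlength]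
    have hbt : (⊥ : Submodule R M) < ⊤ := bot_lt_top
    have := Order.length_le_height_last
      (p := (RelSeries.singleton (α := Submodule R M) _ ⊥).snoc ⊤ hbt)
    simpa using (show ((1 : ℕ) : ℕ∞) ≤ Order.height (⊤ : Submodule R M) from this)

lemma exists_mlength_eq_nat {M : Type v} [AddCommGroup M] [Module R M]
    (h : IsFiniteLength R M) : ∃ n : ℕ, mlength R M = (n : ℕ∞) := by
  induction' h with M _ _ _ M _ _ S _ _ ih
  · exact ⟨0, mlength_eq_zero_of_subsingleton⟩
  · obtain ⟨n, hn⟩ := ih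
    refine ⟨n + 1, ?_⟩
    rw [mlength_eq_add S, hn, mlength_eq_one_of_simple]
    push_cast
    rfl

lemma mlength_prod {M : Type v} {N : Type v} [AddCommGroup M] [Module R M]
    [AddCommGroup N] [Module R N] :
    mlength R (M × N) = mlength R M + mlength R N := by
  rw [mlength_eq_add (LinearMap.ker (LinearMap.snd R M N))]
  congr 1
  · refine (mlength_congr ?_).symm
    exact (LinearEquiv.ofInjective (LinearMap.inl R M N) LinearMap.inl_injective).trans
      (LinearEquiv.ofEq _ _ (LinearMap.range_inl R M N))
  · exact (mlength_congr (LinearMap.quotKerEquivOfSurjective _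
      (LinearMap.snd_surjective (R := R) (M := M) (M₂ := N)))).symm ▸ rfl

lemma mlength_pi_fin (n : ℕ) :
    ∀ (V : Fin n → Type v) [∀ i, AddCommGroup (V i)] [∀ i, Module R (V i)],
    mlength R (∀ i, V i) = ∑ i, mlength R (V i) := by
  induction n with
  | zero =>
    intro V _ _
    rw [Finset.univ_eq_empty, Finset.sum_empty]
    haveI : Subsingleton (∀ i : Fin 0, V i) := ⟨fun a b => funext fun i => i.elim0⟩
    exact mlength_eq_zero_of_subsingleton
  | succ n ih =>
    intro V _ _
    have e1 := LinearEquiv.piCongrLeft' R V (finSuccEquiv n)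
    have e2 := LinearEquiv.piOptionEquivProd (R := R)
      (M := fun o => V ((finSuccEquiv n).symm o))
    rw [mlength_congr (e1.trans e2), mlength_prod,
      ih (fun j => V ((finSuccEquiv n).symm (some j)))]
    rw [← Equiv.sum_comp (finSuccEquiv n).symm (fun i => mlength R (V i)),
      Fintype.sum_option]

lemma mlength_pi {ι : Type*} [Fintype ι] (V : ι → Type v)
    [∀ i, AddCommGroup (V i)] [∀ i, Module R (V i)] :
    mlength R (∀ i, V i) = ∑ i, mlength R (V i) := by
  rw [mlength_congr (LinearEquiv.piCongrLeft' R V (Fintype.equivFin ι)),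
    mlength_pi_fin _ _]
  exact Equiv.sum_comp (Fintype.equivFin ι).symm (fun i => mlength R (V i))


end MLengthHelpers

/-- for an endo-finite representation `M` with `E = End(M)` and a
finite-dimensional representation `X`, both `Hom(X,M)` (the kernel of `δ_{XM}`) and
`Ext¹(X,M)` (its cokernel) have finite `E`-length, and the difference of the lengths is
`Σ x_i |M_i|_E - Σ_α x_{s α} |M_{t α}|_E = ⟨dim X, Dim M⟩`. -/
theorem endo_length_hom_sub_ext (k : Type) [Field k] (Q : FinQuiver) (hQ : Q.Acyclic)
    (M : QRep k Q) (hM : IsFiniteLength (REnd M) (∀ i, M.M i))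
    (X : QRep k Q) [∀ i, FiniteDimensional k (X.M i)]
    (d : Q.V → ℕ) (hd : ∀ i, mlength (REnd M) (M.M i) = (d i : ℕ∞)) :
    IsFiniteLength (REnd M) (LinearMap.ker (deltaE X M)) ∧
    IsFiniteLength (REnd M)
      ((∀ a : Q.A, X.M (Q.s a) →ₗ[k] M.M (Q.t a)) ⧸ LinearMap.range (deltaE X M)) ∧
    ∃ h e : ℕ,
      mlength (REnd M) (LinearMap.ker (deltaE X M)) = (h : ℕ∞) ∧
      mlength (REnd M)
        ((∀ a : Q.A, X.M (Q.s a) →ₗ[k] M.M (Q.t a)) ⧸ LinearMap.range (deltaE X M)) =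
        (e : ℕ∞) ∧
      (h : ℤ) - (e : ℤ) = (∑ i : Q.V, dimVec X i * (d i : ℤ)) -
        ∑ a : Q.A, dimVec X (Q.s a) * (d (Q.t a) : ℤ) := by
  classical
  obtain ⟨hNoe, hArt⟩ := isFiniteLength_iff_isNoetherian_isArtinian.mp hM
  have hproj : ∀ i, Function.Surjective
      (LinearMap.proj (R := REnd M) (φ := fun j => M.M j) i) :=
    fun i x => ⟨Pi.single i x, Pi.single_eq_same i x⟩
  haveI hNoeM : ∀ i, IsNoetherian (REnd M) (M.M i) := fun i =>
    @isNoetherian_of_surjective _ _ _ _ _ _ _ _ _ _ _ _ (LinearMap.proj (R := REnd M) (φ := fun j => M.M j) i) (LinearMap.range_eq_top.mpr (hproj i)) hNoe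
  haveI hArtM : ∀ i, IsArtinian (REnd M) (M.M i) := fun i =>
    @isArtinian_of_surjective _ _ _ _ _ _ _ _ (LinearMap.proj (R := REnd M) (φ := fun j => M.M j) i) (hproj i) hArt
  have hbe : ∀ i j, ((Fin (Module.finrank k (X.M i)) → M.M j) ≃ₗ[REnd M] (X.M i →ₗ[k] M.M j)) :=
    fun i j => (Module.finBasis k (X.M i)).constr (REnd M)
  haveI hHomNoe : ∀ i j, IsNoetherian (REnd M) (X.M i →ₗ[k] M.M j) := fun i j =>
    isNoetherian_of_linearEquiv (hbe i j)
  haveI hHomArt : ∀ i j, IsArtinian (REnd M) (X.M i →ₗ[k] M.M j) := fun i j =>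
    isArtinian_of_linearEquiv (hbe i j)
  have hlen : ∀ i j, mlength (REnd M) (X.M i →ₗ[k] M.M j)
      = ((Module.finrank k (X.M i) * d j : ℕ) : ℕ∞) := by
    intro i j
    rw [← mlength_congr (hbe i j), mlength_pi]
    simp only [hd j]
    rw [Finset.sum_const, Finset.card_univ, Fintype.card_fin, nsmul_eq_mul]
    push_cast
    ring
  haveI : ∀ i, IsNoetherian (REnd M) (X.M i →ₗ[k] M.M i) := fun i => hHomNoe i i
  haveI : ∀ i, IsArtinian (REnd M) (X.M i →ₗ[k] M.M i) := fun i => hHomArt i i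
  haveI : ∀ a : Q.A, IsNoetherian (REnd M) (X.M (Q.s a) →ₗ[k] M.M (Q.t a)) :=
    fun a => hHomNoe _ _
  haveI : ∀ a : Q.A, IsArtinian (REnd M) (X.M (Q.s a) →ₗ[k] M.M (Q.t a)) :=
    fun a => hHomArt _ _
  haveI : IsNoetherian (REnd M) (∀ i, X.M i →ₗ[k] M.M i) := isNoetherian_pi
  haveI : IsArtinian (REnd M) (∀ i, X.M i →ₗ[k] M.M i) := isArtinian_pi
  haveI : IsNoetherian (REnd M) (∀ a : Q.A, X.M (Q.s a) →ₗ[k] M.M (Q.t a)) := isNoetherian_pi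
  haveI : IsArtinian (REnd M) (∀ a : Q.A, X.M (Q.s a) →ₗ[k] M.M (Q.t a)) := isArtinian_pi
  have hFLker : IsFiniteLength (REnd M) (LinearMap.ker (deltaE X M)) :=
    isFiniteLength_iff_isNoetherian_isArtinian.mpr ⟨inferInstance, inferInstance⟩
  have hFLcoker : IsFiniteLength (REnd M)
      ((∀ a : Q.A, X.M (Q.s a) →ₗ[k] M.M (Q.t a)) ⧸ LinearMap.range (deltaE X M)) :=
    isFiniteLength_iff_isNoetherian_isArtinian.mpr ⟨inferInstance, inferInstance⟩
  have hFLrange : IsFiniteLength (REnd M) (LinearMap.range (deltaE X M)) :=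
    isFiniteLength_iff_isNoetherian_isArtinian.mpr ⟨inferInstance, inferInstance⟩
  obtain ⟨h, hh⟩ := exists_mlength_eq_nat hFLker
  obtain ⟨e, he⟩ := exists_mlength_eq_nat hFLcoker
  obtain ⟨r, hr⟩ := exists_mlength_eq_nat hFLrange
  refine ⟨hFLker, hFLcoker, h, e, hh, he, ?_⟩
  have hA : mlength (REnd M) (∀ i, X.M i →ₗ[k] M.M i)
      = ((∑ i, Module.finrank k (X.M i) * d i : ℕ) : ℕ∞) := by
    refine (mlength_pi (R := REnd M) (fun i => X.M i →ₗ[k] M.M i)).trans ?_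
    push_cast
    exact Finset.sum_congr rfl fun i _ => hlen i i
  have hB : mlength (REnd M) (∀ a : Q.A, X.M (Q.s a) →ₗ[k] M.M (Q.t a))
      = ((∑ a, Module.finrank k (X.M (Q.s a)) * d (Q.t a) : ℕ) : ℕ∞) := by
    refine (mlength_pi (R := REnd M) (fun a : Q.A => X.M (Q.s a) →ₗ[k] M.M (Q.t a))).trans ?_
    push_cast
    exact Finset.sum_congr rfl fun a _ => hlen _ _
  have E1 := mlength_eq_add (LinearMap.ker (deltaE X M))
  have E2 : mlength (REnd M)
      ((∀ i, X.M i →ₗ[k] M.M i) ⧸ LinearMap.ker (deltaE X M)) = (r : ℕ∞) :=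
    (mlength_congr (LinearMap.quotKerEquivRange (deltaE X M))).trans hr
  have E3 := mlength_eq_add (LinearMap.range (deltaE X M))
  rw [hA, hh, E2] at E1
  rw [hB, hr, he] at E3
  have c1 : (∑ i, Module.finrank k (X.M i) * d i) = h + r := by exact_mod_cast E1
  have c2 : (∑ a, Module.finrank k (X.M (Q.s a)) * d (Q.t a)) = r + e := by exact_mod_cast E3
  have g1 : (∑ i : Q.V, dimVec X i * (d i : ℤ))
      = ((∑ i, Module.finrank k (X.M i) * d i : ℕ) : ℤ) := by
    push_cast
    exact Finset.sum_congr rfl fun i _ => by simp [dimVec]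
  have g2 : (∑ a : Q.A, dimVec X (Q.s a) * (d (Q.t a) : ℤ))
      = ((∑ a, Module.finrank k (X.M (Q.s a)) * d (Q.t a) : ℕ) : ℤ) := by
    push_cast
    exact Finset.sum_congr rfl fun a _ => by simp [dimVec]
  rw [g1, g2]
  omega
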